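/- Let H be a real inner product space, let T and G be continuous linear operators on H that are both symmetric (self-adjoint), let φ_1, …, φ_k be an orthonormal family in H with T φ_i = λ_i φ_i for real numbers λ_1, …, λ_k, and let Λ be a real number such that Λ ≥ λ_i for every i = 1, …, k and such that Λ‖ψ‖² ≤ ⟪T ψ, ψ⟫ for every ψ ∈ H orthogonal to each of φ_1, …, φ_k. Then ∑_{i=1}^k (Λ − λ_i)² ⟪[T,G] φ_i, G φ_i⟫ ≤ ∑_{i=1}^k (Λ − λ_i) ‖[T,G] φ_i‖². (This is the abstract commutator inequality established by the proof of Theorem 3.1, before the geometric identities are substituted.) -/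
import Mathlib


open scoped RealInnerProductSpace
open Finset

/-- Abstract commutator inequality underlying Theorem 3.1. -/
theorem abstract_commutator_inequality
    {H : Type*} [NormedAddCommGroup H] [InnerProductSpace ℝ H]
    (T G : H →L[ℝ] H)
    (hT : ∀ x y : H, ⟪T x, y⟫ = ⟪x, T y⟫)
    (hG : ∀ x y : H, ⟪G x, y⟫ = ⟪x, G y⟫)
    (k : ℕ) (hk : 1 ≤ k)
    (φ : Fin k → H) (lam : Fin k → ℝ)
    (horth : ∀ i j, ⟪φ i, φ j⟫ = if i = j then (1:ℝ) else 0)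
    (heig : ∀ i, T (φ i) = lam i • φ i)
    (Λ : ℝ) (hΛ : ∀ i, lam i ≤ Λ)
    (hgap : ∀ ψ : H, (∀ i, ⟪ψ, φ i⟫ = 0) → Λ * ‖ψ‖ ^ 2 ≤ ⟪T ψ, ψ⟫) :
    ∑ i, (Λ - lam i) ^ 2 * ⟪(T ∘L G - G ∘L T) (φ i), G (φ i)⟫ ≤
      ∑ i, (Λ - lam i) * ‖(T ∘L G - G ∘L T) (φ i)‖ ^ 2 := by
  set B : H →L[ℝ] H := T ∘L G - G ∘L T with hB
  set g : Fin k → Fin k → ℝ := fun i j => ⟪G (φ i), φ j⟫ with hg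
  have gsymm : ∀ i j, g i j = g j i := by
    intro i j
    simp only [hg]
    rw [hG, real_inner_comm]
  set ψ : Fin k → H := fun i => G (φ i) - ∑ j, g i j • φ j with hψ
  -- orthogonality of ψ i to the φ j
  have hψorth : ∀ i j, ⟪ψ i, φ j⟫ = 0 := by
    intro i j
    have hh : ∀ l : Fin k, (⟪φ l, φ j⟫ : ℝ) = if l = j then 1 else 0 := fun l => horth l j
    simp only [hψ, inner_sub_left, sum_inner, real_inner_smul_left, hh,
      mul_ite, mul_one, mul_zero, Finset.sum_ite_eq', Finset.mem_univ, if_true, hg, sub_self]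
  have hψorth' : ∀ i j, ⟪φ j, ψ i⟫ = 0 := by
    intro i j; rw [real_inner_comm]; exact hψorth i j
  -- decomposition of G φ i
  have hdecompG : ∀ i, G (φ i) = ψ i + ∑ j, g i j • φ j := by
    intro i; simp [hψ]
  -- ⟪B φ i, φ j⟫
  have h2 : ∀ i, B (φ i) = T (G (φ i)) - lam i • G (φ i) := by
    intro i
    simp [hB, ContinuousLinearMap.sub_apply, ContinuousLinearMap.comp_apply, heig, map_smul]
  have hBφφ : ∀ i j, ⟪B (φ i), φ j⟫ = (lam j - lam i) * g i j := by
    intro i j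
    rw [h2, inner_sub_left, real_inner_smul_left, hT, heig, real_inner_smul_right]
    simp only [hg]; ring
  -- decomposition of B φ i
  have hBφ : ∀ i, B (φ i) = (T (ψ i) - lam i • ψ i) +
      ∑ j, ((lam j - lam i) * g i j) • φ j := by
    intro i
    have h1 : T (ψ i) = T (G (φ i)) - ∑ j, (g i j * lam j) • φ j := by
      simp only [hψ, map_sub, map_sum, map_smul, heig, smul_smul]
    rw [h2, h1, hψ, smul_sub, Finset.smul_sum]
    simp only [smul_smul]
    have hS : (∑ j, ((lam j - lam i) * g i j) • φ j)
        = (∑ j, (g i j * lam j) • φ j) - ∑ j, (lam i * g i j) • φ j := by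
      rw [← Finset.sum_sub_distrib]
      refine Finset.sum_congr rfl fun j _ => ?_
      rw [← sub_smul]; congr 1; ring
    rw [hS]; abel
  -- A i := T ψ i - λ i ψ i is orthogonal to the φ j
  have hAφ : ∀ i j, ⟪T (ψ i) - lam i • ψ i, φ j⟫ = 0 := by
    intro i j
    rw [inner_sub_left, real_inner_smul_left, hT, heig, real_inner_smul_right, hψorth]
    ring
  -- (4) expansion of ⟪B φ i, G φ i⟫
  have h4 : ∀ i, ⟪B (φ i), G (φ i)⟫ =
      ⟪T (ψ i) - lam i • ψ i, ψ i⟫ + ∑ j, (lam j - lam i) * (g i j) ^ 2 := by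
    intro i
    rw [hdecompG, inner_add_right, inner_sum]
    congr 1
    · rw [hBφ, inner_add_left, sum_inner]
      simp only [real_inner_smul_left, hψorth', mul_zero, Finset.sum_const_zero, add_zero]
    · refine Finset.sum_congr rfl fun j _ => ?_
      rw [real_inner_smul_right, hBφφ]; ring
  -- (5) Pythagoras for ‖B φ i‖²
  have h5 : ∀ i, ‖B (φ i)‖ ^ 2 =
      ‖T (ψ i) - lam i • ψ i‖ ^ 2 + ∑ j, ((lam j - lam i) * g i j) ^ 2 := by
    intro i
    rw [← real_inner_self_eq_norm_sq, ← real_inner_self_eq_norm_sq, hBφ,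
      inner_add_left, inner_add_right, inner_add_right]
    have hz1 : ⟪T (ψ i) - lam i • ψ i, ∑ j, ((lam j - lam i) * g i j) • φ j⟫ = (0:ℝ) := by
      rw [inner_sum]
      simp only [real_inner_smul_right]
      refine Finset.sum_eq_zero fun j _ => ?_
      rw [hAφ]; ring
    have hz2 : ⟪(∑ j, ((lam j - lam i) * g i j) • φ j), T (ψ i) - lam i • ψ i⟫ = (0:ℝ) := by
      rw [real_inner_comm]; exact hz1
    rw [hz1, hz2]
    have hz3 : ⟪(∑ j, ((lam j - lam i) * g i j) • φ j),
        (∑ j, ((lam j - lam i) * g i j) • φ j)⟫ = ∑ j, ((lam j - lam i) * g i j) ^ 2 := by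
      rw [sum_inner]
      refine Finset.sum_congr rfl fun j _ => ?_
      rw [real_inner_smul_left, inner_sum]
      simp only [real_inner_smul_right, horth, mul_ite, mul_one, mul_zero,
        Finset.sum_ite_eq, Finset.sum_ite_eq', Finset.mem_univ, if_true]
      ring
    rw [hz3]; ring
  -- (6) key operator inequality
  have h6 : ∀ i, (Λ - lam i) * ⟪T (ψ i) - lam i • ψ i, ψ i⟫ ≤
      ‖T (ψ i) - lam i • ψ i‖ ^ 2 := by
    intro i
    have hc : 0 ≤ Λ - lam i := sub_nonneg.2 (hΛ i)
    have hgap' : Λ * ‖ψ i‖ ^ 2 ≤ ⟪T (ψ i), ψ i⟫ := hgap (ψ i) (hψorth i)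
    have hA : T (ψ i) - lam i • ψ i = (T (ψ i) - Λ • ψ i) + (Λ - lam i) • ψ i := by
      rw [sub_smul]; abel
    have hexp : ‖T (ψ i) - lam i • ψ i‖ ^ 2 - (Λ - lam i) * ⟪T (ψ i) - lam i • ψ i, ψ i⟫
        = ‖T (ψ i) - Λ • ψ i‖ ^ 2 + (Λ - lam i) * (⟪T (ψ i), ψ i⟫ - Λ * ‖ψ i‖ ^ 2) := by
      rw [hA]
      simp only [← real_inner_self_eq_norm_sq]
      simp only [inner_add_left, inner_add_right, inner_sub_left, inner_sub_right,
        real_inner_smul_left, real_inner_smul_right]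
      rw [real_inner_comm (ψ i) (T (ψ i))]
      ring
    nlinarith [sq_nonneg ‖T (ψ i) - Λ • ψ i‖, mul_nonneg hc (sub_nonneg.2 hgap')]
  -- per-index inequality up to an antisymmetric correction
  have key : ∀ i, (Λ - lam i) ^ 2 * ⟪B (φ i), G (φ i)⟫ ≤
      (Λ - lam i) * ‖B (φ i)‖ ^ 2 +
      ∑ j, (Λ - lam i) * (Λ - lam j) * (lam j - lam i) * (g i j) ^ 2 := by
    intro i
    rw [h4 i, h5 i]
    have hc : 0 ≤ Λ - lam i := sub_nonneg.2 (hΛ i)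
    have h7 : (Λ - lam i) * ((Λ - lam i) * ⟪T (ψ i) - lam i • ψ i, ψ i⟫) ≤
        (Λ - lam i) * ‖T (ψ i) - lam i • ψ i‖ ^ 2 :=
      mul_le_mul_of_nonneg_left (h6 i) hc
    have hsum : (Λ - lam i) ^ 2 * (∑ j, (lam j - lam i) * (g i j) ^ 2)
        = (Λ - lam i) * (∑ j, ((lam j - lam i) * g i j) ^ 2)
          + ∑ j, (Λ - lam i) * (Λ - lam j) * (lam j - lam i) * (g i j) ^ 2 := by
      rw [Finset.mul_sum, Finset.mul_sum, ← Finset.sum_add_distrib]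
      refine Finset.sum_congr rfl fun j _ => by ring
    nlinarith [hsum, h7]
  -- the antisymmetric correction sums to zero
  have hzero : (∑ i, ∑ j, (Λ - lam i) * (Λ - lam j) * (lam j - lam i) * (g i j) ^ 2) = 0 := by
    set S := ∑ i, ∑ j, (Λ - lam i) * (Λ - lam j) * (lam j - lam i) * (g i j) ^ 2 with hSdef
    have hneg : S = -S := by
      conv_lhs => rw [hSdef, Finset.sum_comm]
      have : ∀ i j : Fin k, (Λ - lam j) * (Λ - lam i) * (lam i - lam j) * (g j i) ^ 2
          = -((Λ - lam i) * (Λ - lam j) * (lam j - lam i) * (g i j) ^ 2) := by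
        intro i j; rw [gsymm j i]; ring
      calc (∑ i, ∑ j, (Λ - lam j) * (Λ - lam i) * (lam i - lam j) * (g j i) ^ 2)
          = ∑ i, ∑ j, -((Λ - lam i) * (Λ - lam j) * (lam j - lam i) * (g i j) ^ 2) := by
            exact Finset.sum_congr rfl fun i _ => Finset.sum_congr rfl fun j _ => this i j
        _ = -S := by rw [hSdef]; simp [Finset.sum_neg_distrib]
    linarith
  calc ∑ i, (Λ - lam i) ^ 2 * ⟪B (φ i), G (φ i)⟫
      ≤ ∑ i, ((Λ - lam i) * ‖B (φ i)‖ ^ 2 +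
          ∑ j, (Λ - lam i) * (Λ - lam j) * (lam j - lam i) * (g i j) ^ 2) :=
        Finset.sum_le_sum fun i _ => key i
    _ = (∑ i, (Λ - lam i) * ‖B (φ i)‖ ^ 2) +
          ∑ i, ∑ j, (Λ - lam i) * (Λ - lam j) * (lam j - lam i) * (g i j) ^ 2 :=
        Finset.sum_add_distrib
    _ = ∑ i, (Λ - lam i) * ‖B (φ i)‖ ^ 2 := by rw [hzero, add_zero]
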